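/- Let s ≥ 1 and d ≥ 2 be integers, let q_1, …, q_s be positive integers, and let 𝕀_1, …, 𝕀_d be subsets of {1, …, s} such that every j ∈ {1, …, s} belongs to exactly two of the sets 𝕀_1, …, 𝕀_d. For each k = 1, …, d let X^k be a real-valued function on ∏_{j∈𝕀_k} Fin q_j, with Frobenius norm ‖X^k‖ equal to the square root of the sum of the squares of its values. Then ∑_{(i_1, …, i_s) ∈ Fin q_1 × ⋯ × Fin q_s} ∏_{k=1}^d X^k((i_j)_{j∈𝕀_k}) ≤ ∏_{k=1}^d ‖X^k‖. -/
import Mathlib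

noncomputable section

/-- Frobenius norm of a real-valued function on a finite type. -/
def frobNormG {ι : Type*} [Fintype ι] (X : ι → ℝ) : ℝ :=
  Real.sqrt (∑ i, (X i) ^ 2)

section Aux

variable {E : Type} [DecidableEq E] (q : E → ℕ) (S : Finset E) (e₀ : E)

/-- glue a function on `S \ {e₀}` with a value at `e₀` -/
def glueF (a : (e : {e : {e : E // e ≠ e₀} // e ∈ S.subtype (· ≠ e₀)}) → Fin (q e.1.1))
    (t : Fin (q e₀)) (e : {e : E // e ∈ S}) : Fin (q e.1) :=
  if h : e.1 = e₀ then Fin.cast (congrArg q h).symm t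
  else a ⟨⟨e.1, h⟩, Finset.mem_subtype.mpr e.2⟩

def resF (h : e₀ ∉ S)
    (a : (e : {e : {e : E // e ≠ e₀} // e ∈ S.subtype (· ≠ e₀)}) → Fin (q e.1.1))
    (e : {e : E // e ∈ S}) : Fin (q e.1) :=
  a ⟨⟨e.1, fun he => h (he ▸ e.2)⟩, Finset.mem_subtype.mpr e.2⟩

def glueEquiv (h : e₀ ∈ S) :
    ((e : {e : {e : E // e ≠ e₀} // e ∈ S.subtype (· ≠ e₀)}) → Fin (q e.1.1)) × Fin (q e₀)
      ≃ ((e : {e : E // e ∈ S}) → Fin (q e.1)) where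
  toFun p := glueF q S e₀ p.1 p.2
  invFun b := (fun e => b ⟨e.1.1, Finset.mem_subtype.mp e.2⟩, b ⟨e₀, h⟩)
  left_inv p := by
    ext e
    · simp only [glueF]
      rw [dif_neg e.1.2]
    · simp [glueF]
  right_inv b := by
    funext e
    simp only [glueF]
    rcases e with ⟨ev, hev⟩
    by_cases h' : ev = e₀
    · rw [dif_pos h']
      subst h'
      simp [Fin.ext_iff]
    · rw [dif_neg h']

def resEquiv (h : e₀ ∉ S) :
    ((e : {e : E // e ∈ S}) → Fin (q e.1))
      ≃ ((e : {e : {e : E // e ≠ e₀} // e ∈ S.subtype (· ≠ e₀)}) → Fin (q e.1.1)) where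
  toFun b e := b ⟨e.1.1, Finset.mem_subtype.mp e.2⟩
  invFun a := resF q S e₀ h a
  left_inv b := rfl
  right_inv a := rfl

def splitEquiv : ((e : {e : E // e ≠ e₀}) → Fin (q e.1)) × Fin (q e₀) ≃ ((e : E) → Fin (q e)) where
  toFun p e := if h : e = e₀ then Fin.cast (congrArg q h).symm p.2 else p.1 ⟨e, h⟩
  invFun b := (fun e => b e.1, b e₀)
  left_inv p := by
    ext e
    · dsimp only
      rw [dif_neg e.2]
    · dsimp only
      rw [dif_pos rfl]
      simp
  right_inv b := by
    funext e
    dsimp only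
    by_cases h' : e = e₀
    · rw [dif_pos h']
      subst h'
      simp [Fin.ext_iff]
    · rw [dif_neg h']

end Aux

lemma key_nonneg (n : ℕ) :
    ∀ (V E : Type) [Fintype V] [Fintype E] [DecidableEq E] [DecidableEq V]
      (q : E → ℕ) (I : V → Finset E)
      (_ : ∀ e : E, (Finset.univ.filter (fun v => e ∈ I v)).card = 2)
      (X : ∀ v, ((e : {e : E // e ∈ I v}) → Fin (q e)) → ℝ)
      (_ : ∀ v a, 0 ≤ X v a) (_ : Fintype.card E = n),
      ∑ i : (e : E) → Fin (q e), ∏ v, X v (fun e => i e) ≤ ∏ v, frobNormG (X v) := by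
  induction n with
  | zero =>
    intro V E _ _ _ _ q I hI X hX hn
    have hE : IsEmpty E := Fintype.card_eq_zero_iff.mp hn
    haveI := hE
    rw [Fintype.sum_unique]
    apply Finset.prod_le_prod (fun v _ => hX v _)
    intro v _
    haveI : IsEmpty {e : E // e ∈ I v} := ⟨fun e => hE.false e.1⟩
    rw [frobNormG, Fintype.sum_unique, Real.sqrt_sq_eq_abs]
    exact le_trans (le_abs_self _)
      (le_of_eq (congrArg (fun z => |X v z|) (Subsingleton.elim _ _)))
  | succ n ih =>
    intro V E _ _ _ _ q I hI X hX hn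
    have hEpos : 0 < Fintype.card E := by omega
    obtain ⟨e₀⟩ := Fintype.card_pos_iff.mp hEpos
    obtain ⟨v₁, v₂, hv12, hset⟩ := Finset.card_eq_two.mp (hI e₀)
    have hmem : ∀ v, e₀ ∈ I v ↔ v = v₁ ∨ v = v₂ := by
      intro v
      constructor
      · intro h
        have hv : v ∈ Finset.univ.filter (fun v => e₀ ∈ I v) := by simp [h]
        rw [hset] at hv
        simpa using hv
      · intro h
        have hv : v ∈ ({v₁, v₂} : Finset V) := by simpa using h
        rw [← hset] at hv
        simpa using hv
    have h1 : e₀ ∈ I v₁ := (hmem v₁).mpr (Or.inl rfl)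
    have h2 : e₀ ∈ I v₂ := (hmem v₂).mpr (Or.inr rfl)
    set E' := {e : E // e ≠ e₀} with hE'
    set q' : E' → ℕ := fun e => q e.1 with hq'
    set I' : V → Finset E' := fun v => (I v).subtype (· ≠ e₀) with hI'def
    set X' : ∀ v, ((e : {e : E' // e ∈ I' v}) → Fin (q' e)) → ℝ := fun v a =>
      if h : e₀ ∈ I v then Real.sqrt (∑ t : Fin (q e₀), (X v (glueF q (I v) e₀ a t))^2)
      else X v (resF q (I v) e₀ h a) with hX'def
    have hX' : ∀ v a, 0 ≤ X' v a := by
      intro v a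
      by_cases h : e₀ ∈ I v
      · simp only [hX'def, dif_pos h]
        exact Real.sqrt_nonneg _
      · simp only [hX'def, dif_neg h]
        exact hX v _
    have hI' : ∀ e : E', (Finset.univ.filter (fun v => e ∈ I' v)).card = 2 := by
      intro e
      have heq : (Finset.univ.filter (fun v => e ∈ I' v))
          = (Finset.univ.filter (fun v => e.1 ∈ I v)) := by
        apply Finset.filter_congr
        intro v _
        exact Finset.mem_subtype
      rw [heq, hI]
    have hcard : Fintype.card E' = n := by
      have hc : Fintype.card {e : E // ¬ (e = e₀)} = Fintype.card E - Fintype.card {e : E // e = e₀} :=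
        Fintype.card_subtype_compl _
      rw [Fintype.card_subtype_eq] at hc
      have : Fintype.card E' = Fintype.card {e : E // ¬ (e = e₀)} := rfl
      omega
    have IH := ih V E' q' I' hI' X' hX' hcard
    -- restriction facts
    have hres : ∀ (a : (e : E') → Fin (q' e)) (t : Fin (q e₀)) (v : V), e₀ ∉ I v →
        X v (fun e => splitEquiv q e₀ (a, t) e.1) = X' v (fun e => a e.1) := by
      intro a t v h
      simp only [hX'def, dif_neg h]
      congr 1
      funext e
      have hne : (e : E) ≠ e₀ := fun hh => h (hh ▸ e.2)
      simp only [splitEquiv, Equiv.coe_fn_mk]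
      rw [dif_neg hne]
      rfl
    have hglue : ∀ (a : (e : E') → Fin (q' e)) (t : Fin (q e₀)) (v : V),
        X v (fun e => splitEquiv q e₀ (a, t) e.1)
          = X v (glueF q (I v) e₀ (fun e => a e.1) t) := by
      intro a t v
      congr 1
    have hsplit : ∀ f : V → ℝ, ∏ v, f v
        = f v₁ * (f v₂ * ∏ v ∈ (Finset.univ.erase v₁).erase v₂, f v) := by
      intro f
      rw [Finset.mul_prod_erase _ f (Finset.mem_erase.mpr ⟨hv12.symm, Finset.mem_univ v₂⟩)]
      rw [Finset.mul_prod_erase _ f (Finset.mem_univ v₁)]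
    have hA : ∑ i : (e : E) → Fin (q e), ∏ v, X v (fun e => i e)
        ≤ ∑ i : (e : E') → Fin (q' e), ∏ v, X' v (fun e => i e) := by
      rw [← Equiv.sum_comp (splitEquiv q e₀) (fun i => ∏ v, X v (fun e => i e))]
      rw [Fintype.sum_prod_type]
      apply Finset.sum_le_sum
      intro a _
      set C : ℝ := ∏ v ∈ (Finset.univ.erase v₁).erase v₂, X' v (fun e => a e.1) with hC
      have hCnn : 0 ≤ C := Finset.prod_nonneg (fun v _ => hX' v _)
      have hrest : ∀ t : Fin (q e₀),
          ∏ v ∈ (Finset.univ.erase v₁).erase v₂, X v (fun e => splitEquiv q e₀ (a, t) e.1) = C := by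
        intro t
        apply Finset.prod_congr rfl
        intro v hv
        simp only [Finset.mem_erase] at hv
        have hnotin : e₀ ∉ I v := by
          intro hcontra
          rcases (hmem v).mp hcontra with h | h
          · exact hv.2.1 h
          · exact hv.1 h
        exact hres a t v hnotin
      calc ∑ t : Fin (q e₀), ∏ v, X v (fun e => splitEquiv q e₀ (a, t) e.1)
          = ∑ t : Fin (q e₀), (X v₁ (glueF q (I v₁) e₀ (fun e => a e.1) t)
              * X v₂ (glueF q (I v₂) e₀ (fun e => a e.1) t)) * C := by
            apply Finset.sum_congr rfl
            intro t _
            rw [hsplit (fun v => X v (fun e => splitEquiv q e₀ (a, t) e.1))]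
            rw [hglue a t v₁, hglue a t v₂, hrest t]
            ring
        _ = (∑ t : Fin (q e₀), X v₁ (glueF q (I v₁) e₀ (fun e => a e.1) t)
              * X v₂ (glueF q (I v₂) e₀ (fun e => a e.1) t)) * C := by
            rw [Finset.sum_mul]
        _ ≤ (Real.sqrt (∑ t : Fin (q e₀), (X v₁ (glueF q (I v₁) e₀ (fun e => a e.1) t))^2)
              * Real.sqrt (∑ t : Fin (q e₀), (X v₂ (glueF q (I v₂) e₀ (fun e => a e.1) t))^2)) * C := by
            apply mul_le_mul_of_nonneg_right _ hCnn
            exact Real.sum_mul_le_sqrt_mul_sqrt _ _ _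
        _ = X' v₁ (fun e => a e.1) * (X' v₂ (fun e => a e.1) * C) := by
            simp only [hX'def, dif_pos h1, dif_pos h2]
            ring
        _ = ∏ v, X' v (fun e => a e.1) := (hsplit (fun v => X' v (fun e => a e.1))).symm
    have hB : ∏ v, frobNormG (X' v) = ∏ v, frobNormG (X v) := by
      apply Finset.prod_congr rfl
      intro v _
      by_cases h : e₀ ∈ I v
      · unfold frobNormG
        congr 1
        have hsq : ∀ a, (X' v a)^2 = ∑ t : Fin (q e₀), (X v (glueF q (I v) e₀ a t))^2 := by
          intro a
          simp only [hX'def, dif_pos h]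
          rw [Real.sq_sqrt]
          positivity
        rw [Finset.sum_congr rfl (fun a _ => hsq a)]
        rw [← Equiv.sum_comp (glueEquiv q (I v) e₀ h) (fun b => (X v b)^2)]
        rw [Fintype.sum_prod_type]
        rfl
      · unfold frobNormG
        congr 1
        simp only [hX'def, dif_neg h]
        exact Equiv.sum_comp (resEquiv q (I v) e₀ h).symm (fun b => (X v b)^2)
    calc ∑ i : (e : E) → Fin (q e), ∏ v, X v (fun e => i e)
        ≤ ∑ i : (e : E') → Fin (q' e), ∏ v, X' v (fun e => i e) := hA
      _ ≤ ∏ v, frobNormG (X' v) := IH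
      _ = ∏ v, frobNormG (X v) := hB

lemma key_general (V E : Type) [Fintype V] [Fintype E] [DecidableEq E] [DecidableEq V]
    (q : E → ℕ) (I : V → Finset E)
    (hI : ∀ e : E, (Finset.univ.filter (fun v => e ∈ I v)).card = 2)
    (X : ∀ v, ((e : {e : E // e ∈ I v}) → Fin (q e)) → ℝ) :
    ∑ i : (e : E) → Fin (q e), ∏ v, X v (fun e => i e) ≤ ∏ v, frobNormG (X v) := by
  have h1 : ∑ i : (e : E) → Fin (q e), ∏ v, X v (fun e => i e)
      ≤ ∑ i : (e : E) → Fin (q e), ∏ v, |X v (fun e => i e)| := by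
    apply Finset.sum_le_sum
    intro i _
    calc ∏ v, X v (fun e => i e) ≤ |∏ v, X v (fun e => i e)| := le_abs_self _
      _ = ∏ v, |X v (fun e => i e)| := Finset.abs_prod _ _
  refine h1.trans ?_
  have h2 := key_nonneg (Fintype.card E) V E q I hI (fun v a => |X v a|)
    (fun v a => abs_nonneg _) rfl
  refine h2.trans (le_of_eq ?_)
  apply Finset.prod_congr rfl
  intro v _
  unfold frobNormG
  congr 1
  apply Finset.sum_congr rfl
  intro a _
  rw [sq_abs]

theorem stmt_10 {s d : ℕ} (hs : 1 ≤ s) (hd : 2 ≤ d)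
    (q : Fin s → ℕ) (hq : ∀ j, 0 < q j)
    (I : Fin d → Finset (Fin s))
    (hI : ∀ j : Fin s, (Finset.univ.filter (fun k => j ∈ I k)).card = 2)
    (X : ∀ k : Fin d, ((j : {j : Fin s // j ∈ I k}) → Fin (q j)) → ℝ) :
    ∑ i : (j : Fin s) → Fin (q j), ∏ k, X k (fun j => i j) ≤ ∏ k, frobNormG (X k) := by
  exact key_general (Fin d) (Fin s) q I hI X
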